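/- Let S be a decision rule system with n(S) > 0. Then h_EAR(S) ≥ ln|S^max| / ln(k(S)+1). -/

import Mathlib

/-! Formalization of decision rule systems and decision trees
(Durdymyradov & Moshkov, "Greedy Algorithm for Inference of Decision Trees
from Decision Rule Systems"). -/

/-- Values of attributes: `some δ` is a natural number value, `none` is the
special symbol `*` (interpreted as a value not occurring in the system). -/
abbrev Val := Option ℕ

/-- A decision rule `(a_{i₁}=δ₁) ∧ ⋯ ∧ (a_{iₘ}=δₘ) → σ`: the left-hand side
is a finite set of equations (attribute, value), the right-hand side a decision. -/
structure Rule where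
  lhs : Finset (ℕ × ℕ)
  rhs : ℕ
deriving DecidableEq

namespace Rule

/-- `A(r)`: the set of attributes of a rule. -/
def attrs (r : Rule) : Finset ℕ := r.lhs.image Prod.fst

/-- `K(r)`: the equation system of the left-hand side of a rule. -/
def K (r : Rule) : Finset (ℕ × Val) := r.lhs.image (fun p => (p.1, some p.2))

/-- the length of a rule -/
def len (r : Rule) : ℕ := r.lhs.card

/-- A rule is wellformed if the attributes in its left-hand side are pairwise
different, i.e. each attribute carries at most one equation. -/
def WF (r : Rule) : Prop := ∀ p ∈ r.lhs, ∀ q ∈ r.lhs, p.1 = q.1 → p = q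

end Rule

/-- `A(S)`: the set of attributes of a system of decision rules. -/
def attrsS (S : Finset Rule) : Finset ℕ := S.biUnion Rule.attrs

/-- `n(S) = |A(S)|`. -/
def nS (S : Finset Rule) : ℕ := (attrsS S).card

/-- `d(S)`: maximum length of a rule of `S`. -/
def dS (S : Finset Rule) : ℕ := S.sup Rule.len

/-- `V_S(a)`: the set of values δ such that the equation `a = δ` occurs in `S`. -/
def VS (S : Finset Rule) (a : ℕ) : Finset ℕ :=
  S.biUnion (fun r => (r.lhs.filter (fun p => p.1 = a)).image Prod.snd)

/-- `EV_S(a) = V_S(a) ∪ {*}`. -/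
def EVS (S : Finset Rule) (a : ℕ) : Finset Val := insert none ((VS S a).image some)

/-- `k(S) = max{|V_S(a)| : a ∈ A(S)}`. -/
def kS (S : Finset Rule) : ℕ := (attrsS S).sup (fun a => (VS S a).card)

/-- A (wellformed) decision rule system: a finite nonempty set of wellformed rules. -/
def SysWF (S : Finset Rule) : Prop := S.Nonempty ∧ ∀ r ∈ S, r.WF

/-- An equation system is consistent if it does not assign two different values
to the same attribute. -/
def Consistent (E : Finset (ℕ × Val)) : Prop :=
  ∀ p ∈ E, ∀ q ∈ E, p.1 = q.1 → p.2 = q.2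

instance : DecidablePred Consistent := fun E => by unfold Consistent; infer_instance

/-- `r_α`: the rule obtained from `r` by deleting from its left-hand side all
equations belonging to `α`. -/
def Rule.restrict (r : Rule) (α : Finset (ℕ × Val)) : Rule :=
  ⟨r.lhs.filter (fun p => ((p.1, (some p.2 : Val)) ∉ α)), r.rhs⟩

/-- `S_α`: the set of rules `r_α` for `r ∈ S` with `K(r) ∪ α` consistent. -/
def sysRestrict (S : Finset Rule) (α : Finset (ℕ × Val)) : Finset Rule :=
  (S.filter (fun r => Consistent (r.K ∪ α))).image (fun r => r.restrict α)

/-- Extended decision trees: terminal nodes are labeled with sets of rules, and a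
working node is labeled with an attribute and has one child for each value
(only the children corresponding to values in `EV_S(a)` are relevant). -/
inductive DT where
  | leaf (τ : Finset Rule) : DT
  | node (a : ℕ) (c : Val → DT) : DT

/-- `Γ` is an extended decision tree over `S`: working nodes are labeled with
attributes of `A(S)` (with edges labeled by the elements of `EV_S(a)`),
terminal nodes with subsets of `S`. -/
def DT.Over (S : Finset Rule) : DT → Prop
  | .leaf τ => τ ⊆ S
  | .node a c => a ∈ attrsS S ∧ ∀ v ∈ EVS S a, DT.Over S (c v)

/-- `h(Γ)`: the maximum number of working nodes in a complete path of `Γ`. -/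
def DT.depth (S : Finset Rule) : DT → ℕ
  | .leaf _ => 0
  | .node a c => 1 + (EVS S a).sup (fun v => DT.depth S (c v))

/-- The number of terminal nodes of `Γ`. -/
def DT.numLeaves (S : Finset Rule) : DT → ℕ
  | .leaf _ => 1
  | .node a c => ∑ v ∈ EVS S a, DT.numLeaves S (c v)

/-- `Γ` solves `EAR(S)` starting from the already accumulated equation system `E`:
for every complete path `ξ` with consistent `K(ξ)`, every rule of the terminal
label `τ(ξ)` satisfies `K(r) ⊆ K(ξ)`, and every other rule of `S` has
`K(r) ∪ K(ξ)` inconsistent. -/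
def DT.SolvesFrom (S : Finset Rule) : DT → Finset (ℕ × Val) → Prop
  | .leaf τ, E => Consistent E →
      (∀ r ∈ τ, r.K ⊆ E) ∧ ∀ r ∈ S, r ∉ τ → ¬ Consistent (r.K ∪ E)
  | .node a c, E => ∀ v ∈ EVS S a, DT.SolvesFrom S (c v) (insert (a, v) E)

/-- `Γ` is a decision tree over `S` solving the problem `EAR(S)`. -/
def DT.SolvesEAR (S : Finset Rule) (Γ : DT) : Prop := Γ.Over S ∧ Γ.SolvesFrom S ∅

/-- `h_EAR(S)`: the minimum depth of a decision tree over `S` solving `EAR(S)`. -/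
noncomputable def hEAR (S : Finset Rule) : ℕ :=
  sInf {n | ∃ Γ : DT, DT.SolvesEAR S Γ ∧ DT.depth S Γ = n}

/-- A node cover of the hypergraph `G(S)`. -/
def IsNodeCover (S : Finset Rule) (B : Finset ℕ) : Prop :=
  B ⊆ attrsS S ∧ ∀ r ∈ S, r.attrs.Nonempty → (r.attrs ∩ B).Nonempty

/-- `β(S)`: the minimum cardinality of a node cover of `G(S)`. -/
noncomputable def betaS (S : Finset Rule) : ℕ :=
  sInf {k | ∃ B : Finset ℕ, IsNodeCover S B ∧ B.card = k}

/-- `M` is a possible choice of `S^max`: a set of rules of `S` of length `d(S)`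
containing exactly one representative from each equivalence class
(`r₁ ∼ r₂ iff K(r₁) = K(r₂)`) of the set of rules of length `d(S)`, and
no other rules. -/
def IsMaxSet (S M : Finset Rule) : Prop :=
  (∀ r ∈ M, r ∈ S ∧ r.len = dS S) ∧
  (∀ r ∈ S, r.len = dS S → ∃ r' ∈ M, r'.K = r.K) ∧
  (∀ r₁ ∈ M, ∀ r₂ ∈ M, r₁.K = r₂.K → r₁ = r₂)

/-- `δ̄ ∈ EV(S)`, a tuple represented as a function on attributes. -/
def InEV (S : Finset Rule) (f : ℕ → Val) : Prop := ∀ a ∈ attrsS S, f a ∈ EVS S a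

/-- `K(S, δ̄)`. -/
def KofTuple (S : Finset Rule) (f : ℕ → Val) : Finset (ℕ × Val) :=
  (attrsS S).image (fun a => (a, f a))

/-- The rule `r` is realizable for the tuple `δ̄`, i.e. `K(r) ⊆ K(S, δ̄)`. -/
def Realizable (S : Finset Rule) (f : ℕ → Val) (r : Rule) : Prop :=
  r.K ⊆ KofTuple S f

instance (S : Finset Rule) (f : ℕ → Val) : DecidablePred (Realizable S f) :=
  fun r => by unfold Realizable; infer_instance

/-! ### Auxiliary development for Lemma 4 -/

/-- The tuple associated with a rule: value from the rule if present, `*` otherwise. -/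
noncomputable def ftup (r : Rule) (a : ℕ) : Val :=
  if h : ((r.lhs.filter (fun p => p.1 = a)).image Prod.snd).Nonempty
  then some (((r.lhs.filter (fun p => p.1 = a)).image Prod.snd).min' h)
  else none

lemma ftup_eq_some (r : Rule) (a δ : ℕ) (h : ftup r a = some δ) : (a, δ) ∈ r.lhs := by
  unfold ftup at h
  split at h
  · rename_i hne
    obtain ⟨p, hp, hp2⟩ := Finset.mem_image.mp (Finset.min'_mem _ hne)
    obtain ⟨hpl, hp1⟩ := Finset.mem_filter.mp hp
    have hδ : p.2 = δ := by rw [hp2]; exact Option.some.inj h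
    have : p = (a, δ) := Prod.ext hp1 hδ
    rwa [this] at hpl
  · exact absurd h (by simp)

lemma ftup_of_mem (r : Rule) (hr : r.WF) (a δ : ℕ) (h : (a, δ) ∈ r.lhs) :
    ftup r a = some δ := by
  have hne : ((r.lhs.filter (fun p => p.1 = a)).image Prod.snd).Nonempty :=
    ⟨δ, Finset.mem_image.mpr ⟨(a, δ), Finset.mem_filter.mpr ⟨h, rfl⟩, rfl⟩⟩
  unfold ftup
  rw [dif_pos hne]
  congr 1
  obtain ⟨p, hp, hp2⟩ := Finset.mem_image.mp (Finset.min'_mem _ hne)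
  have hpf := Finset.mem_filter.mp hp
  have : p = (a, δ) := hr p hpf.1 (a, δ) h hpf.2
  rw [this] at hp2
  exact hp2.symm

lemma ftup_mem_EVS (S : Finset Rule) (r : Rule) (hr : r ∈ S) (a : ℕ) :
    ftup r a ∈ EVS S a := by
  cases h : ftup r a with
  | none => simp [EVS]
  | some δ =>
    have hl := ftup_eq_some r a δ h
    simp only [EVS, Finset.mem_insert, Finset.mem_image]
    right
    exact ⟨δ, by
      simp only [VS, Finset.mem_biUnion]
      exact ⟨r, hr, Finset.mem_image.mpr ⟨(a, δ), Finset.mem_filter.mpr ⟨hl, rfl⟩, rfl⟩⟩, rfl⟩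

/-- Evaluate a tree on a tuple, returning the accumulated equation system and leaf label. -/
def DT.evalE : DT → (ℕ → Val) → Finset (ℕ × Val) → Finset (ℕ × Val) × Finset Rule
  | .leaf τ, _, E => (E, τ)
  | .node a c, f, E => DT.evalE (c (f a)) f (insert (a, f a) E)

/-- All equation systems arising at leaves of a tree. -/
def DT.allE (S : Finset Rule) : DT → Finset (ℕ × Val) → Finset (Finset (ℕ × Val))
  | .leaf _, E => {E}
  | .node a c, E => (EVS S a).biUnion fun v => DT.allE S (c v) (insert (a, v) E)

lemma evalE_mem_allE (S : Finset Rule) (f : ℕ → Val)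
    (hf : ∀ a ∈ attrsS S, f a ∈ EVS S a) :
    ∀ Γ : DT, Γ.Over S → ∀ E, (Γ.evalE f E).1 ∈ DT.allE S Γ E := by
  intro Γ
  induction Γ with
  | leaf τ => intro _ E; simp [DT.evalE, DT.allE]
  | node a c ih =>
    intro hO E
    simp only [DT.evalE, DT.allE, Finset.mem_biUnion]
    exact ⟨f a, hf a hO.1, ih (f a) (hO.2 (f a) (hf a hO.1)) _⟩

lemma EVS_card_le (S : Finset Rule) (a : ℕ) (ha : a ∈ attrsS S) :
    (EVS S a).card ≤ kS S + 1 := by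
  have h1 : (EVS S a).card ≤ ((VS S a).image some).card + 1 := Finset.card_insert_le _ _
  have h2 : ((VS S a).image some).card ≤ (VS S a).card := Finset.card_image_le
  have h3 : (VS S a).card ≤ kS S := Finset.le_sup (f := fun a => (VS S a).card) ha
  omega

lemma allE_card_le (S : Finset Rule) :
    ∀ Γ : DT, Γ.Over S → ∀ E, (DT.allE S Γ E).card ≤ (kS S + 1) ^ (Γ.depth S) := by
  intro Γ
  induction Γ with
  | leaf τ => intro _ E; simp [DT.allE, DT.depth]
  | node a c ih =>
    intro hO E
    simp only [DT.allE, DT.depth]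
    calc ((EVS S a).biUnion fun v => DT.allE S (c v) (insert (a, v) E)).card
        ≤ ∑ v ∈ EVS S a, (DT.allE S (c v) (insert (a, v) E)).card :=
          Finset.card_biUnion_le
      _ ≤ ∑ v ∈ EVS S a, (kS S + 1) ^ ((EVS S a).sup fun v => DT.depth S (c v)) := by
          apply Finset.sum_le_sum
          intro v hv
          exact le_trans (ih v (hO.2 v hv) _)
            (Nat.pow_le_pow_right (Nat.succ_le_succ (Nat.zero_le _))
              (Finset.le_sup (f := fun v => DT.depth S (c v)) hv))
      _ = (EVS S a).card * (kS S + 1) ^ ((EVS S a).sup fun v => DT.depth S (c v)) := by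
          rw [Finset.sum_const, smul_eq_mul]
      _ ≤ (kS S + 1) * (kS S + 1) ^ ((EVS S a).sup fun v => DT.depth S (c v)) :=
          Nat.mul_le_mul_right _ (EVS_card_le S a hO.1)
      _ = (kS S + 1) ^ (1 + (EVS S a).sup fun v => DT.depth S (c v)) := by
          rw [pow_add, pow_one]

/-- Main evaluation lemma. -/
lemma evalE_spec (S : Finset Rule) (f : ℕ → Val)
    (hf : ∀ a ∈ attrsS S, f a ∈ EVS S a) :
    ∀ Γ : DT, Γ.Over S → ∀ E, Γ.SolvesFrom S E → (∀ p ∈ E, p.2 = f p.1) →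
      (∀ p ∈ (Γ.evalE f E).1, p.2 = f p.1) ∧
      (∀ r ∈ (Γ.evalE f E).2, r.K ⊆ (Γ.evalE f E).1) ∧
      (∀ r ∈ S, r ∉ (Γ.evalE f E).2 → ¬ Consistent (r.K ∪ (Γ.evalE f E).1)) := by
  intro Γ
  induction Γ with
  | leaf τ =>
    intro _ E hs hE
    have hcons : Consistent E := by
      intro p hp q hq hpq
      rw [hE p hp, hE q hq, hpq]
    obtain ⟨h1, h2⟩ := hs hcons
    exact ⟨hE, h1, h2⟩
  | node a c ih =>
    intro hO E hs hE
    have hfa : f a ∈ EVS S a := hf a hO.1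
    refine ih (f a) (hO.2 (f a) hfa) (insert (a, f a) E) (hs (f a) hfa) ?_
    intro p hp
    rcases Finset.mem_insert.mp hp with h | h
    · rw [h]
    · exact hE p h

lemma mem_K_iff (r : Rule) (a δ : ℕ) : (a, (some δ : Val)) ∈ r.K ↔ (a, δ) ∈ r.lhs := by
  simp only [Rule.K, Finset.mem_image]
  constructor
  · rintro ⟨p, hp, h⟩
    have : p = (a, δ) := by cases p; simp_all
    rwa [this] at hp
  · intro h; exact ⟨(a, δ), h, rfl⟩

/-- A rule traced through a solving tree reaches a leaf containing it, and `K(r)` is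
contained in the accumulated equation system. -/
lemma trace_rule (S : Finset Rule) (Γ : DT) (hO : Γ.Over S) (hs : Γ.SolvesFrom S ∅)
    (r : Rule) (hr : r ∈ S) (hw : r.WF) :
    (∀ p ∈ (Γ.evalE (ftup r) ∅).1, p.2 = ftup r p.1) ∧ r.K ⊆ (Γ.evalE (ftup r) ∅).1 := by
  have hf : ∀ a ∈ attrsS S, ftup r a ∈ EVS S a := fun a _ => ftup_mem_EVS S r hr a
  obtain ⟨h1, h2, h3⟩ := evalE_spec S (ftup r) hf Γ hO ∅ hs (by simp)
  refine ⟨h1, ?_⟩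
  by_cases hmem : r ∈ (Γ.evalE (ftup r) ∅).2
  · exact h2 r hmem
  · exfalso
    apply h3 r hr hmem
    intro p hp q hq hpq
    have key : ∀ p ∈ r.K ∪ (Γ.evalE (ftup r) ∅).1, p.2 = ftup r p.1 := by
      intro p hp
      rcases Finset.mem_union.mp hp with h | h
      · obtain ⟨x, hx, hx2⟩ := Finset.mem_image.mp h
        rw [← hx2]
        exact (ftup_of_mem r hw x.1 x.2 hx).symm
      · exact h1 p h
    rw [key p hp, key q hq, hpq]

/-- The full tree querying all attributes in a list. -/
def fullTree (S : Finset Rule) : List ℕ → Finset (ℕ × Val) → DT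
  | [], E => .leaf (S.filter (fun r => r.K ⊆ E))
  | a :: l, E => .node a (fun v => fullTree S l (insert (a, v) E))

lemma fullTree_over (S : Finset Rule) :
    ∀ l : List ℕ, (∀ a ∈ l, a ∈ attrsS S) → ∀ E, (fullTree S l E).Over S := by
  intro l
  induction l with
  | nil => intro _ E; exact Finset.filter_subset _ _
  | cons a l ih =>
    intro hl E
    exact ⟨hl a List.mem_cons_self, fun v _ =>
      ih (fun b hb => hl b (List.mem_cons_of_mem a hb)) _⟩

lemma fullTree_solves (S : Finset Rule) :
    ∀ l : List ℕ, ∀ E : Finset (ℕ × Val),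
      (∀ a ∈ attrsS S, a ∈ l ∨ ∃ v, (a, v) ∈ E) →
      (fullTree S l E).SolvesFrom S E := by
  intro l
  induction l with
  | nil =>
    intro E hinv hcons
    constructor
    · intro r hrm
      exact (Finset.mem_filter.mp hrm).2
    · intro r hr hrn hcons2
      have hns : ¬ r.K ⊆ E := by
        intro hsub
        exact hrn (Finset.mem_filter.mpr ⟨hr, hsub⟩)
      obtain ⟨p, hp, hpE⟩ := Finset.not_subset.mp hns
      obtain ⟨x, hx, hx2⟩ := Finset.mem_image.mp hp
      have haA : x.1 ∈ attrsS S := by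
        apply Finset.mem_biUnion.mpr
        exact ⟨r, hr, Finset.mem_image.mpr ⟨x, hx, rfl⟩⟩
      obtain ⟨v, hv⟩ := (hinv x.1 haA).resolve_left (by simp)
      have h1 : p ∈ r.K ∪ E := Finset.mem_union_left _ hp
      have h2 : (x.1, v) ∈ r.K ∪ E := Finset.mem_union_right _ hv
      have := hcons2 p h1 (x.1, v) h2 (by rw [← hx2])
      rw [← hx2] at this
      simp only at this
      apply hpE
      rw [← hx2, this]
      exact hv
  | cons a l ih =>
    intro E hinv v _
    apply ih
    intro b hb
    rcases hinv b hb with h | h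
    · rcases List.mem_cons.mp h with h | h
      · exact Or.inr ⟨v, by rw [h]; exact Finset.mem_insert_self _ _⟩
      · exact Or.inl h
    · obtain ⟨w, hw⟩ := h
      exact Or.inr ⟨w, Finset.mem_insert_of_mem hw⟩

lemma hEAR_witness (S : Finset Rule) :
    ∃ Γ : DT, DT.SolvesEAR S Γ ∧ Γ.depth S = hEAR S := by
  have hne : {n | ∃ Γ : DT, DT.SolvesEAR S Γ ∧ DT.depth S Γ = n}.Nonempty := by
    refine ⟨_, fullTree S (attrsS S).toList ∅, ⟨?_, ?_⟩, rfl⟩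
    · exact fullTree_over S _ (fun a ha => Finset.mem_toList.mp ha) ∅
    · exact fullTree_solves S _ ∅ (fun a ha => Or.inl (Finset.mem_toList.mpr ha))
  obtain ⟨Γ, hΓ, hd⟩ := Nat.sInf_mem hne
  exact ⟨Γ, hΓ, hd⟩

lemma one_le_kS (S : Finset Rule) (hn : 0 < nS S) : 1 ≤ kS S := by
  obtain ⟨a, ha⟩ := Finset.card_pos.mp hn
  obtain ⟨r, hr, har⟩ := Finset.mem_biUnion.mp ha
  obtain ⟨p, hp, hp1⟩ := Finset.mem_image.mp har
  have : p.2 ∈ VS S a := by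
    apply Finset.mem_biUnion.mpr
    exact ⟨r, hr, Finset.mem_image.mpr ⟨p, Finset.mem_filter.mpr ⟨hp, hp1⟩, rfl⟩⟩
  calc 1 ≤ (VS S a).card := Finset.card_pos.mpr ⟨p.2, this⟩
    _ ≤ kS S := Finset.le_sup (f := fun a => (VS S a).card) ha

lemma card_M_le (S : Finset Rule) (hS : SysWF S) (M : Finset Rule) (hM : IsMaxSet S M) :
    M.card ≤ (kS S + 1) ^ (hEAR S) := by
  obtain ⟨Γ, ⟨hO, hs⟩, hd⟩ := hEAR_witness S
  have hinj : Set.InjOn (fun r => (Γ.evalE (ftup r) ∅).1) M := by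
    intro r₁ h₁ r₂ h₂ heq
    simp only at heq
    have hr₁S := (hM.1 r₁ h₁).1
    have hr₂S := (hM.1 r₂ h₂).1
    obtain ⟨hE₁, hK₁⟩ := trace_rule S Γ hO hs r₁ hr₁S (hS.2 r₁ hr₁S)
    obtain ⟨hE₂, hK₂⟩ := trace_rule S Γ hO hs r₂ hr₂S (hS.2 r₂ hr₂S)
    have hsub : ∀ (s t : Rule), (Γ.evalE (ftup s) ∅).1 = (Γ.evalE (ftup t) ∅).1 →
        s.K ⊆ (Γ.evalE (ftup s) ∅).1 →
        (∀ p ∈ (Γ.evalE (ftup t) ∅).1, p.2 = ftup t p.1) → s.K ⊆ t.K := by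
      intro s t he hKs hEt
      intro p hp
      obtain ⟨x, hx, hx2⟩ := Finset.mem_image.mp hp
      have hpE : p ∈ (Γ.evalE (ftup t) ∅).1 := he ▸ hKs hp
      have := hEt p hpE
      rw [← hx2] at this ⊢
      simp only at this
      have hxt : (x.1, x.2) ∈ t.lhs := ftup_eq_some t x.1 x.2 this.symm
      exact (mem_K_iff t x.1 x.2).mpr hxt
    have h12 : r₁.K ⊆ r₂.K := hsub r₁ r₂ heq hK₁ hE₂
    have h21 : r₂.K ⊆ r₁.K := hsub r₂ r₁ heq.symm hK₂ hE₁
    exact hM.2.2 r₁ h₁ r₂ h₂ (Finset.Subset.antisymm h12 h21)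
  have hmap : ∀ r ∈ M, (Γ.evalE (ftup r) ∅).1 ∈ DT.allE S Γ ∅ := by
    intro r hr
    exact evalE_mem_allE S (ftup r) (fun a _ => ftup_mem_EVS S r (hM.1 r hr).1 a) Γ hO ∅
  calc M.card ≤ (DT.allE S Γ ∅).card := Finset.card_le_card_of_injOn _ hmap hinj
    _ ≤ (kS S + 1) ^ (Γ.depth S) := allE_card_le S Γ hO ∅
    _ = (kS S + 1) ^ (hEAR S) := by rw [hd]

/-- Lemma 4: Let `S` be a decision rule system with `n(S) > 0`. Then
`h_EAR(S) ≥ ln |S^max| / ln (k(S) + 1)`. -/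
theorem hEAR_ge_log_card_SMax (S : Finset Rule) (hS : SysWF S) (hn : 0 < nS S)
    (M : Finset Rule) (hM : IsMaxSet S M) :
    (hEAR S : ℝ) ≥ Real.log M.card / Real.log (kS S + 1) := by
  have hk := one_le_kS S hn
  have hcard := card_M_le S hS M hM
  have hb : (1:ℝ) < (kS S : ℝ) + 1 := by
    have : (1:ℝ) ≤ (kS S : ℝ) := by exact_mod_cast hk
    linarith
  have hlogb : 0 < Real.log ((kS S : ℝ) + 1) := Real.log_pos hb
  rw [ge_iff_le, div_le_iff₀ hlogb]
  rcases Nat.eq_zero_or_pos M.card with h | h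
  · rw [h]
    simp only [Nat.cast_zero, Real.log_zero]
    positivity
  · have h1 : Real.log (M.card : ℝ) ≤ Real.log (((kS S + 1) ^ (hEAR S) : ℕ) : ℝ) := by
      apply Real.log_le_log (by exact_mod_cast h)
      exact_mod_cast hcard
    calc Real.log (M.card : ℝ) ≤ Real.log (((kS S + 1) ^ (hEAR S) : ℕ) : ℝ) := h1
      _ = (hEAR S : ℝ) * Real.log ((kS S : ℝ) + 1) := by
          push_cast
          rw [Real.log_pow]
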